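/- Let m be an integer with |m| > 2, A = [[m,1],[-1,0]], Ã = [[0,1],[1,0]], and let Φ₀ be the subgroup of GL(2, ℤ) generated by A, Ã, and −E (E the identity matrix), and Φ = ⟨A⟩ the cyclic subgroup generated by A. Then Φ is normal in Φ₀ and the quotient group Φ₀/Φ is isomorphic to ℤ/2 × ℤ/2. -/
import Mathlib

private lemma stmt11_pow_aux (m : ℤ) (hm : 2 < |m|) :
    ∀ n : ℕ, ∃ a b c : ℤ,
      (!![m, 1; -1, 0] : Matrix (Fin 2) (Fin 2) ℤ) ^ (n + 1) = !![a, b; -b, c] ∧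
      1 ≤ |b| ∧ |b| < |a| ∧ c = a - m * b := by
  intro n
  induction n with
  | zero =>
    exact ⟨m, 1, 0, by norm_num, by norm_num, by simpa using by linarith, by ring⟩
  | succ n ih =>
    obtain ⟨a, b, c, hM, hb, hba, hc⟩ := ih
    have habs : |a| < |a * m - b| := by
      have h1 : |a * m| - |b| ≤ |a * m - b| := abs_sub_abs_le_abs_sub _ _
      have h2 : |a * m| = |a| * |m| := abs_mul a m
      nlinarith [abs_nonneg a]
    refine ⟨a * m - b, a, -b, ?_, by linarith, habs, by ring⟩
    rw [pow_succ, hM, Matrix.mul_fin_two, hc]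
    congr 1 <;> ring_nf

/-- Let `Φ₀ ≤ GL(2,ℤ)` be generated by `A = [[m,1],[-1,0]]`, `Ã = [[0,1],[1,0]]` and `-E`,
with `|m| > 2`, and let `Φ = ⟨A⟩`. Then `Φ` is normal in `Φ₀` and `Φ₀/Φ ≅ ℤ/2 × ℤ/2`. -/
theorem stmt11 (m : ℤ) (hm : 2 < |m|)
    (A Atil NegE : Matrix.GeneralLinearGroup (Fin 2) ℤ)
    (hA : (A : Matrix (Fin 2) (Fin 2) ℤ) = !![m, 1; -1, 0])
    (hAtil : (Atil : Matrix (Fin 2) (Fin 2) ℤ) = !![0, 1; 1, 0])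
    (hNegE : (NegE : Matrix (Fin 2) (Fin 2) ℤ) = -1) :
    ((Subgroup.zpowers A).subgroupOf (Subgroup.closure {A, Atil, NegE})).Normal ∧
    ∀ [inst : ((Subgroup.zpowers A).subgroupOf (Subgroup.closure {A, Atil, NegE})).Normal],
      Nonempty ((Subgroup.closure {A, Atil, NegE} ⧸
          (Subgroup.zpowers A).subgroupOf (Subgroup.closure {A, Atil, NegE})) ≃*
        (Multiplicative (ZMod 2) × Multiplicative (ZMod 2))) := by
  -- basic relations
  have hAt2 : Atil * Atil = 1 := by
    apply Units.ext
    rw [Units.val_mul, hAtil]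
    norm_num [Matrix.mul_fin_two]
    exact Matrix.one_fin_two.symm
  have hE2 : NegE * NegE = 1 := by
    apply Units.ext
    rw [Units.val_mul, hNegE]
    norm_num
  have hcen : ∀ g : Matrix.GeneralLinearGroup (Fin 2) ℤ, NegE * g = g * NegE := by
    intro g
    apply Units.ext
    rw [Units.val_mul, Units.val_mul, hNegE]
    simp
  have hAtinv : Atil⁻¹ = Atil := inv_eq_of_mul_eq_one_right hAt2
  have hEinv : NegE⁻¹ = NegE := inv_eq_of_mul_eq_one_right hE2
  have hconjAt : Atil * A * Atil = A⁻¹ := by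
    apply eq_inv_of_mul_eq_one_left
    apply Units.ext
    rw [Units.val_mul, Units.val_mul, Units.val_mul, hA, hAtil]
    norm_num [Matrix.mul_fin_two]
    exact Matrix.one_fin_two.symm
  -- conjugation lemma
  have conjpow : ∀ x : Matrix.GeneralLinearGroup (Fin 2) ℤ,
      x * A * x⁻¹ ∈ Subgroup.zpowers A →
      ∀ y ∈ Subgroup.zpowers A, x * y * x⁻¹ ∈ Subgroup.zpowers A := by
    intro x hx y hy
    obtain ⟨k, rfl⟩ := Subgroup.mem_zpowers_iff.mp hy
    have h : x * A ^ k * x⁻¹ = (x * A * x⁻¹) ^ k := by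
      simpa [MulAut.conj_apply] using (map_zpow (MulAut.conj x) A k)
    rw [h]
    exact Subgroup.zpow_mem _ hx k
  have key : ∀ x ∈ Subgroup.closure {A, Atil, NegE},
      x * A * x⁻¹ ∈ Subgroup.zpowers A ∧ x⁻¹ * A * x ∈ Subgroup.zpowers A := by
    intro x hx
    induction hx using Subgroup.closure_induction with
    | mem x hx =>
      have hEconj : NegE * A * NegE⁻¹ = A := by
        rw [hEinv, show NegE * A * NegE = A * (NegE * NegE) from by rw [hcen A, mul_assoc], hE2,
          mul_one]
      rcases hx with h | h | h
      · rw [h]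
        constructor
        · rw [show A * A * A⁻¹ = A from by group]; exact Subgroup.mem_zpowers A
        · rw [show A⁻¹ * A * A = A from by group]; exact Subgroup.mem_zpowers A
      · rw [h, hAtinv, hconjAt]
        exact ⟨Subgroup.inv_mem _ (Subgroup.mem_zpowers A),
               Subgroup.inv_mem _ (Subgroup.mem_zpowers A)⟩
      · rw [h]
        constructor
        · rw [hEconj]; exact Subgroup.mem_zpowers A
        · rw [hEinv] at hEconj ⊢
          rw [hEconj]; exact Subgroup.mem_zpowers A
    | one => simpa using Subgroup.mem_zpowers A
    | mul x y hx hy ihx ihy =>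
      constructor
      · rw [show x * y * A * (x * y)⁻¹ = x * (y * A * y⁻¹) * x⁻¹ from by group]
        exact conjpow x ihx.1 _ (ihy.1)
      · rw [show (x * y)⁻¹ * A * (x * y) = y⁻¹ * (x⁻¹ * A * x) * (y⁻¹)⁻¹ from by group]
        refine conjpow y⁻¹ ?_ _ (ihx.2)
        simpa using ihy.2
    | inv x hx ihx =>
      refine ⟨?_, ?_⟩
      · simpa using ihx.2
      · simpa using ihx.1
  have hnormal : ((Subgroup.zpowers A).subgroupOf (Subgroup.closure {A, Atil, NegE})).Normal := by
    constructor
    intro n hn g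
    rw [Subgroup.mem_subgroupOf] at hn ⊢
    simpa using conjpow (g : Matrix.GeneralLinearGroup (Fin 2) ℤ) (key g g.2).1 _ hn
  refine ⟨hnormal, ?_⟩
  intro inst
  have hAmem : A ∈ Subgroup.closure {A, Atil, NegE} := Subgroup.subset_closure (by simp)
  have hAtmem : Atil ∈ Subgroup.closure {A, Atil, NegE} := Subgroup.subset_closure (by simp)
  have hEmem : NegE ∈ Subgroup.closure {A, Atil, NegE} := Subgroup.subset_closure (by simp)
  set Φ₀ := Subgroup.closure {A, Atil, NegE} with hPhi
  set N := (Subgroup.zpowers A).subgroupOf Φ₀ with hNdef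
  let π := QuotientGroup.mk' N
  let a := π ⟨Atil, hAtmem⟩
  let e := π ⟨NegE, hEmem⟩
  have hadef : a = π ⟨Atil, hAtmem⟩ := rfl
  have hedef : e = π ⟨NegE, hEmem⟩ := rfl
  have ha2 : a ^ 2 = 1 := by
    rw [hadef, pow_two, ← map_mul]
    have h1 : (⟨Atil, hAtmem⟩ : Φ₀) * ⟨Atil, hAtmem⟩ = 1 := Subtype.ext (by simpa using hAt2)
    rw [h1, map_one]
  have he2 : e ^ 2 = 1 := by
    rw [hedef, pow_two, ← map_mul]
    have h1 : (⟨NegE, hEmem⟩ : Φ₀) * ⟨NegE, hEmem⟩ = 1 := Subtype.ext (by simpa using hE2)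
    rw [h1, map_one]
  have hcomm : Commute a e := by
    rw [Commute, SemiconjBy, hadef, hedef, ← map_mul, ← map_mul]
    congr 1
    exact Subtype.ext (by simpa using (hcen Atil).symm)
  have hpa : ∀ u v : ZMod 2, a ^ ((u + v).val) = a ^ u.val * a ^ v.val := by
    intro u v
    rw [ZMod.val_add, ← pow_eq_pow_mod _ ha2, pow_add]
  have hpe : ∀ u v : ZMod 2, e ^ ((u + v).val) = e ^ u.val * e ^ v.val := by
    intro u v
    rw [ZMod.val_add, ← pow_eq_pow_mod _ he2, pow_add]
  let φ : Multiplicative (ZMod 2) × Multiplicative (ZMod 2) →* (Φ₀ ⧸ N) :=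
  { toFun := fun x =>
      a ^ ((Multiplicative.toAdd x.1).val) * e ^ ((Multiplicative.toAdd x.2).val)
    map_one' := by simp
    map_mul' := by
      rintro ⟨x1, x2⟩ ⟨y1, y2⟩
      show a ^ ((Multiplicative.toAdd (x1 * y1)).val) *
          e ^ ((Multiplicative.toAdd (x2 * y2)).val) = _
      rw [toAdd_mul, toAdd_mul, hpa, hpe]
      exact (hcomm.pow_pow _ _).mul_mul_mul_comm _ _ }
  have hφdef : ∀ x : Multiplicative (ZMod 2) × Multiplicative (ZMod 2),
      φ x = a ^ ((Multiplicative.toAdd x.1).val) * e ^ ((Multiplicative.toAdd x.2).val) :=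
    fun _ => rfl
  -- determinant facts
  have hdetA : Matrix.GeneralLinearGroup.det A = 1 := by
    apply Units.ext
    show Matrix.det ((A : Matrix (Fin 2) (Fin 2) ℤ)) = 1
    rw [hA, Matrix.det_fin_two_of]; ring
  have hdetzp : ∀ x ∈ Subgroup.zpowers A,
      Matrix.det ((x : Matrix.GeneralLinearGroup (Fin 2) ℤ) : Matrix (Fin 2) (Fin 2) ℤ) = 1 := by
    intro x hx
    obtain ⟨k, rfl⟩ := Subgroup.mem_zpowers_iff.mp hx
    have h1 : Matrix.GeneralLinearGroup.det (A ^ k) = 1 := by rw [map_zpow, hdetA, one_zpow]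
    exact congrArg Units.val h1
  have hAt_nz : Atil ∉ Subgroup.zpowers A := by
    intro h
    have h1 := hdetzp _ h
    rw [hAtil, Matrix.det_fin_two_of] at h1
    norm_num at h1
  have hAtE_nz : Atil * NegE ∉ Subgroup.zpowers A := by
    intro h
    have h1 := hdetzp _ h
    rw [Units.val_mul, Matrix.det_mul, hAtil, hNegE, Matrix.det_fin_two_of] at h1
    norm_num [Matrix.det_neg] at h1
  have hE_nz : NegE ∉ Subgroup.zpowers A := by
    intro h
    obtain ⟨k, hk⟩ := Subgroup.mem_zpowers_iff.mp h
    have hpos : ∀ j : ℤ, 0 < j → A ^ j ≠ NegE := by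
      intro j hj hn
      obtain ⟨n, hn'⟩ : ∃ n : ℕ, j = (n : ℤ) + 1 := ⟨j.toNat - 1, by omega⟩
      rw [hn', show ((n : ℤ) + 1) = ((n + 1 : ℕ) : ℤ) by push_cast; ring, zpow_natCast] at hn
      obtain ⟨p, q, r, hM, hbp, hba, hc⟩ := stmt11_pow_aux m hm n
      have hv : ((A : Matrix (Fin 2) (Fin 2) ℤ)) ^ (n + 1) = (-1 : Matrix (Fin 2) (Fin 2) ℤ) := by
        rw [← Units.val_pow_eq_pow_val, hn, hNegE]
      rw [hA, hM] at hv
      have h01 := Matrix.ext_iff.mpr hv 0 1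
      simp [Matrix.neg_apply, Matrix.one_apply] at h01
      rw [h01] at hbp
      simp at hbp
    rcases lt_trichotomy k 0 with hk0 | hk0 | hk0
    · have h2 : A ^ (-k) = NegE := by rw [zpow_neg, hk, hEinv]
      exact hpos (-k) (by omega) h2
    · rw [hk0, zpow_zero] at hk
      have h1 : (1 : Matrix (Fin 2) (Fin 2) ℤ) = (-1 : Matrix (Fin 2) (Fin 2) ℤ) := by
        rw [← hNegE, ← hk, Units.val_one]
      have h2 := Matrix.ext_iff.mpr h1 0 0
      simp [Matrix.neg_apply, Matrix.one_apply] at h2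
    · exact hpos k hk0 hk
  have hπ1 : ∀ x : ↥Φ₀, π x = 1 ↔ (x : Matrix.GeneralLinearGroup (Fin 2) ℤ) ∈ Subgroup.zpowers A := by
    intro x
    rw [show π x = (x : ↥Φ₀ ⧸ N) from rfl, QuotientGroup.eq_one_iff, hNdef,
      Subgroup.mem_subgroupOf]
  have hval0 : (Multiplicative.toAdd (1 : Multiplicative (ZMod 2))).val = 0 := by decide
  have hval1 : (Multiplicative.toAdd (Multiplicative.ofAdd (1 : ZMod 2))).val = 1 := by decide
  have hinj : Function.Injective φ := by
    refine (injective_iff_map_eq_one φ).mpr ?_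
    rintro ⟨x1, x2⟩ hx
    have hcases : ∀ u : Multiplicative (ZMod 2), u = 1 ∨ u = Multiplicative.ofAdd 1 := by decide
    rw [hφdef] at hx
    rcases hcases x1 with rfl | rfl <;> rcases hcases x2 with rfl | rfl
    · rfl
    · exfalso
      rw [hval0, hval1, pow_zero, pow_one, one_mul, hedef, hπ1] at hx
      exact hE_nz hx
    · exfalso
      rw [hval0, hval1, pow_zero, pow_one, mul_one, hadef, hπ1] at hx
      exact hAt_nz hx
    · exfalso
      rw [hval1, pow_one, pow_one, hadef, hedef, ← map_mul, hπ1] at hx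
      exact hAtE_nz hx
  have hsurj : Function.Surjective φ := by
    intro q
    obtain ⟨g, rfl⟩ := QuotientGroup.mk'_surjective N q
    obtain ⟨g, hg⟩ := g
    induction hg using Subgroup.closure_induction with
    | mem x hx =>
      rcases hx with h | h | h
      · exact ⟨1, by
          rw [map_one]
          exact ((hπ1 _).mpr (by show x ∈ Subgroup.zpowers A; rw [h]; exact Subgroup.mem_zpowers A)).symm⟩
      · refine ⟨(Multiplicative.ofAdd 1, 1), ?_⟩
        rw [hφdef, hval0, hval1, pow_one, pow_zero, mul_one, hadef]
        exact congrArg π (Subtype.ext h.symm)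
      · refine ⟨(1, Multiplicative.ofAdd 1), ?_⟩
        rw [hφdef, hval0, hval1, pow_one, pow_zero, one_mul, hedef]
        exact congrArg π (Subtype.ext h.symm)
    | one =>
      exact ⟨1, by
        rw [map_one]
        exact ((hπ1 _).mpr (Subgroup.one_mem _)).symm⟩
    | mul x y hx hy ihx ihy =>
      obtain ⟨r, hr⟩ := ihx
      obtain ⟨s, hs⟩ := ihy
      exact ⟨r * s, by rw [map_mul, hr, hs, ← map_mul]; rfl⟩
    | inv x hx ihx =>
      obtain ⟨r, hr⟩ := ihx
      exact ⟨r⁻¹, by rw [map_inv, hr, ← map_inv]; rfl⟩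
  exact ⟨(MulEquiv.ofBijective φ ⟨hinj, hsurj⟩).symm⟩
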